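/- Let T_N be negative binomial with parameters N ≥ 1 and p ∈ (0,1), i.e., P(T_N = t) = C(t+N-1, N-1) p^N (1-p)^t for t = 0,1,2,.... Then E[N/(T_N + N)] = p^N · ₂F₁(N, N; N+1; 1-p), where ₂F₁ is the Gauss hypergeometric function. -/

import Mathlib

/-- The Pochhammer symbol (rising factorial) `(x)ₙ = x(x+1)⋯(x+n-1)`. -/
noncomputable def poch (x : ℝ) (n : ℕ) : ℝ := ∏ i ∈ Finset.range n, (x + i)

/-- The Gauss hypergeometric series `₂F₁(a, b; c; z)`. -/
noncomputable def hyp2F1 (a b c z : ℝ) : ℝ :=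
  ∑' n : ℕ, poch a n * poch b n / (poch c n * n.factorial) * z ^ n

lemma poch_succ (x : ℝ) (n : ℕ) : poch x (n + 1) = poch x n * (x + n) := by
  simp [poch, Finset.prod_range_succ]

lemma poch_nat_eq (N : ℕ) (hN : 1 ≤ N) (t : ℕ) :
    poch (N : ℝ) t = ((t + N - 1).choose (N - 1) : ℝ) * (t.factorial : ℝ) := by
  induction t with
  | zero => simp [poch]
  | succ t ih =>
      rw [poch_succ, ih]
      have key := Nat.choose_mul_succ_eq (t + N - 1) (N - 1)
      have h1 : t + N - 1 + 1 = t + N := by omega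
      have h2 : t + N - (N - 1) = t + 1 := by omega
      rw [h1, h2] at key
      have keyR : ((t + N - 1).choose (N - 1) : ℝ) * ((t : ℝ) + N) =
          ((t + N).choose (N - 1) : ℝ) * ((t : ℝ) + 1) := by
        have := congrArg (fun n : ℕ => (n : ℝ)) key
        push_cast at this
        linarith [this]
      have h3 : t + 1 + N - 1 = t + N := by omega
      rw [h3, Nat.factorial_succ]
      push_cast
      nlinarith [keyR]

lemma poch_shift (N : ℕ) (t : ℕ) :
    (N : ℝ) * poch ((N : ℝ) + 1) t = ((t : ℝ) + N) * poch (N : ℝ) t := by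
  induction t with
  | zero => simp [poch]
  | succ t ih =>
      rw [poch_succ, poch_succ]
      push_cast
      nlinarith [ih]

lemma poch_pos (x : ℝ) (hx : 0 < x) (n : ℕ) : 0 < poch x n := by
  apply Finset.prod_pos
  intro i _
  positivity

/-- First moment of the ML estimator: if `T_N` is negative binomial with
pmf `P(T_N = t) = C(t+N-1, N-1) p^N (1-p)^t`, then
`E[N/(T_N + N)] = p^N · ₂F₁(N, N; N+1; 1-p)`. -/
theorem ml_estimator_first_moment (N : ℕ) (hN : 1 ≤ N) (p : ℝ)
    (hp : 0 < p) (hp1 : p < 1) :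
    (∑' t : ℕ, ((N : ℝ) / (t + N)) *
        (((t + N - 1).choose (N - 1) : ℝ) * p ^ N * (1 - p) ^ t))
      = p ^ N * hyp2F1 N N (N + 1) (1 - p) := by
  rw [hyp2F1, ← tsum_mul_left]
  apply tsum_congr
  intro t
  have hNpos : (0 : ℝ) < N := by exact_mod_cast hN
  have htN : (0 : ℝ) < (t : ℝ) + N := by positivity
  have hb : 0 < poch ((N : ℝ) + 1) t := poch_pos _ (by positivity) t
  have hfac : (0 : ℝ) < (t.factorial : ℝ) := by exact_mod_cast t.factorial_pos
  have h1 := poch_nat_eq N hN t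
  have h2 := poch_shift N t
  rw [h1] at h2 ⊢
  set c : ℝ := ((t + N - 1).choose (N - 1) : ℝ)
  field_simp
  linear_combination (c * (1 - p) ^ t) * h2
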